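/- Let F : ℝ≥0 → ℝ be Lipschitz and convex with right derivative F' and Stieltjes measure F''. Let γ : (0,∞) → ℝ be an absolutely continuous nondecreasing function with γ(0+)=0. Then for every l > 0, ∫₀^l γ'(z) e^{γ(z)} (∫_{(z,l]} e^{-γ(m)} F''(dm)) dz = F'(l) − F'(0) − ∫_{(0,l]} e^{-γ(m)} F''(dm). -/

import Mathlib

open MeasureTheory Set Filter Nat

lemma myaux_pow (g : ℝ → ℝ) (B : ℝ) (hg : IntegrableOn g (Ioc 0 B)) :
    ∀ n : ℕ, ∀ b ≤ B, ∫ z in Ioc 0 b, g z * (∫ t in Ioc 0 z, g t) ^ n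
      = (∫ t in Ioc 0 b, g t) ^ (n + 1) / (n + 1) := by
  intro n
  induction n with
  | zero => intro b _; simp
  | succ n IH =>
    intro b hb
    rcases le_or_gt b 0 with hb0 | hb0
    · rw [Ioc_eq_empty (by exact fun h => absurd (h.trans_le hb0) (lt_irrefl 0))]
      simp
    set Q : ℝ → ℝ := fun x => ∫ t in Ioc 0 x, g t with hQdef
    have hgb : IntegrableOn g (Ioc 0 b) := hg.mono_set (Ioc_subset_Ioc_right hb)
    have hQc : ContinuousOn Q (Icc 0 b) :=
      intervalIntegral.continuousOn_primitive ((integrableOn_Icc_iff_integrableOn_Ioc).2 hgb)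
    obtain ⟨C, hC⟩ := isCompact_Icc.exists_bound_of_continuousOn hQc
    have hC' : ∀ x ∈ Ioc (0:ℝ) b, |Q x| ≤ C := fun x hx => by
      simpa [Real.norm_eq_abs] using hC x (Ioc_subset_Icc_self hx)
    set μb := volume.restrict (Ioc (0:ℝ) b) with hμb
    haveI hfin : IsFiniteMeasure μb := by
      constructor
      rw [hμb, Measure.restrict_apply_univ]
      exact measure_Ioc_lt_top
    -- measurability pieces
    have hQm : AEStronglyMeasurable Q μb := by
      have := hQc.aestronglyMeasurable measurableSet_Icc (μ := volume)
      exact this.mono_measure (Measure.restrict_mono Ioc_subset_Icc_self le_rfl)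
    have hgm : AEStronglyMeasurable g μb := hgb.aestronglyMeasurable
    have hQpm : ∀ k : ℕ, AEStronglyMeasurable (fun x => Q x ^ k) μb := fun k =>
      (hQm.aemeasurable.pow_const k).aestronglyMeasurable
    have hpow : ∀ k : ℕ, Integrable (fun w => g w * Q w ^ k) μb := by
      intro k
      refine Integrable.mono' (hgb.norm.mul_const (C ^ k)) (hgm.mul (hQpm k)) ?_
      filter_upwards [ae_restrict_mem measurableSet_Ioc] with w hw
      simp only [Real.norm_eq_abs, abs_mul, abs_pow]
      exact mul_le_mul_of_nonneg_left (pow_le_pow_left₀ (abs_nonneg _) (hC' w hw) k)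
        (abs_nonneg _)
    set H : ℝ × ℝ → ℝ := fun p => if p.2 ≤ p.1 then g p.1 * (g p.2 * Q p.2 ^ n) else 0
      with hHdef
    have hHm : AEStronglyMeasurable H (μb.prod μb) := by
      have hinner : AEStronglyMeasurable (fun p : ℝ × ℝ => g p.1 * (g p.2 * Q p.2 ^ n))
          (μb.prod μb) := hgm.comp_fst.mul (hgm.comp_snd.mul (hQpm n).comp_snd)
      have : H = {p : ℝ × ℝ | p.2 ≤ p.1}.indicator
          (fun p => g p.1 * (g p.2 * Q p.2 ^ n)) := by
        ext p
        by_cases h : p.2 ≤ p.1 <;> simp [hHdef, Set.indicator_apply, h]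
      rw [this]
      exact hinner.indicator (measurableSet_le measurable_snd measurable_fst)
    have hHint : Integrable H (μb.prod μb) := by
      refine Integrable.mono' ((hgb.norm).mul_prod ((hgb.norm).mul_const (C ^ n))) hHm ?_
      rw [hμb, Measure.prod_restrict]
      filter_upwards [ae_restrict_mem (measurableSet_Ioc.prod measurableSet_Ioc)] with p hp
      have hC0 : (0:ℝ) ≤ C := (abs_nonneg (Q 0)).trans
        (by simpa [Real.norm_eq_abs] using hC 0 ⟨le_refl 0, hb0.le⟩)
      rcases le_or_gt p.2 p.1 with h | h
      · simp only [hHdef, if_pos h, Real.norm_eq_abs, abs_mul, abs_pow]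
        exact mul_le_mul_of_nonneg_left (mul_le_mul_of_nonneg_left
          (pow_le_pow_left₀ (abs_nonneg _) (hC' p.2 hp.2) n) (abs_nonneg _)) (abs_nonneg _)
      · simp only [hHdef, if_neg (not_le.2 h), norm_zero, Real.norm_eq_abs]
        exact mul_nonneg (abs_nonneg _) (mul_nonneg (abs_nonneg _) (pow_nonneg hC0 n))
    have key1 : ∀ z ∈ Ioc (0:ℝ) b, (∫ w, H (z, w) ∂μb) = g z * ∫ w in Ioc 0 z, g w * Q w ^ n := by
      intro z hz
      have h1 : (fun w => H (z, w)) = (Iic z).indicator (fun w => g z * (g w * Q w ^ n)) := by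
        ext w
        by_cases h : w ≤ z <;> simp [hHdef, Set.indicator_apply, h]
      rw [h1, integral_indicator measurableSet_Iic, hμb,
        Measure.restrict_restrict measurableSet_Iic]
      have h2 : Iic z ∩ Ioc 0 b = Ioc 0 z := by
        rw [Set.inter_comm, Ioc_inter_Iic, min_eq_right hz.2]
      rw [h2, MeasureTheory.integral_const_mul]
    have key2 : ∀ w ∈ Ioc (0:ℝ) b, (∫ z, H (z, w) ∂μb)
        = (g w * Q w ^ n) * (Q b - Q w) := by
      intro w hw
      have h1 : (fun z => H (z, w)) = (Ici w).indicator (fun z => g z * (g w * Q w ^ n)) := by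
        ext z
        by_cases h : w ≤ z <;> simp [hHdef, Set.indicator_apply, h]
      rw [h1, integral_indicator measurableSet_Ici, hμb,
        Measure.restrict_restrict measurableSet_Ici]
      have h2 : Ici w ∩ Ioc 0 b = Icc w b := by
        ext z
        simp only [mem_inter_iff, mem_Ici, mem_Ioc, mem_Icc]
        exact ⟨fun h => ⟨h.1, h.2.2⟩, fun h => ⟨h.1, hw.1.trans_le h.1, h.2⟩⟩
      have h3 : ∫ z in Icc w b, g z = Q b - Q w := by
        rw [integral_Icc_eq_integral_Ioc]
        have hsplit : Q w + ∫ z in Ioc w b, g z = Q b := by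
          rw [hQdef]
          rw [← setIntegral_union (Set.Ioc_disjoint_Ioc_of_le le_rfl) measurableSet_Ioc
            (hgb.mono_set (Ioc_subset_Ioc_right hw.2)) (hgb.mono_set (Ioc_subset_Ioc_left hw.1.le)),
            Ioc_union_Ioc_eq_Ioc hw.1.le hw.2]
        linarith
      rw [h2, integral_mul_const, h3]
      ring
    -- main computation
    have hIH' : ∀ z ∈ Ioc (0:ℝ) b, g z * Q z ^ (n + 1)
        = (n + 1 : ℝ) * (g z * ∫ w in Ioc 0 z, g w * Q w ^ n) := by
      intro z hz
      rw [IH z (hz.2.trans hb)]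
      have : ((n:ℝ) + 1) ≠ 0 := by positivity
      field_simp
      rfl
    have step1 : ∫ z in Ioc (0:ℝ) b, g z * Q z ^ (n + 1)
        = (n + 1 : ℝ) * ∫ z, (∫ w, H (z, w) ∂μb) ∂μb := by
      rw [← MeasureTheory.integral_const_mul]
      refine setIntegral_congr_fun measurableSet_Ioc fun z hz => ?_
      rw [hIH' z hz, key1 z hz]
    have step2 : ∫ z, (∫ w, H (z, w) ∂μb) ∂μb = ∫ w, (∫ z, H (z, w) ∂μb) ∂μb :=
      integral_integral_swap hHint
    have step3 : ∫ w, (∫ z, H (z, w) ∂μb) ∂μb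
        = Q b * (Q b ^ (n + 1) / (n + 1)) - ∫ w in Ioc (0:ℝ) b, g w * Q w ^ (n + 1) := by
      have e1 : ∫ w, (∫ z, H (z, w) ∂μb) ∂μb
          = ∫ w in Ioc (0:ℝ) b, (Q b * (g w * Q w ^ n) - g w * Q w ^ (n + 1)) := by
        refine setIntegral_congr_fun measurableSet_Ioc fun w hw => ?_
        rw [key2 w hw]
        ring
      rw [e1, integral_sub ((hpow n).const_mul (Q b)) (hpow (n + 1)),
        MeasureTheory.integral_const_mul, IH b hb]
    have hA := step1.trans (congrArg (fun x => ((n:ℝ) + 1) * x) (step2.trans step3))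
    set A := ∫ z in Ioc (0:ℝ) b, g z * Q z ^ (n + 1) with hAdef
    have hn1 : ((n:ℝ) + 1) ≠ 0 := by positivity
    have hn2 : ((n:ℝ) + 1 + 1) ≠ 0 := by positivity
    have : A = (n + 1 : ℝ) * (Q b * (Q b ^ (n + 1) / (n + 1)) - A) := hA
    push_cast
    field_simp at this ⊢
    ring_nf at this ⊢
    linarith

lemma myaux_exp (g : ℝ → ℝ) (b : ℝ) (hg : IntegrableOn g (Ioc 0 b)) :
    ∫ z in Ioc 0 b, g z * Real.exp (∫ t in Ioc 0 z, g t)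
      = Real.exp (∫ t in Ioc 0 b, g t) - 1 := by
  rcases le_or_gt b 0 with hb0 | hb0
  · rw [Ioc_eq_empty (by exact fun h => absurd (h.trans_le hb0) (lt_irrefl 0))]
    simp
  set Q : ℝ → ℝ := fun x => ∫ t in Ioc 0 x, g t with hQdef
  have hQc : ContinuousOn Q (Icc 0 b) :=
    intervalIntegral.continuousOn_primitive ((integrableOn_Icc_iff_integrableOn_Ioc).2 hg)
  obtain ⟨C, hC⟩ := isCompact_Icc.exists_bound_of_continuousOn hQc
  have hC' : ∀ x ∈ Ioc (0:ℝ) b, |Q x| ≤ C := fun x hx => by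
    simpa [Real.norm_eq_abs] using hC x (Ioc_subset_Icc_self hx)
  have hC0 : (0:ℝ) ≤ C := (abs_nonneg (Q 0)).trans
    (by simpa [Real.norm_eq_abs] using hC 0 ⟨le_refl 0, hb0.le⟩)
  set μb := volume.restrict (Ioc (0:ℝ) b) with hμb
  haveI hfin : IsFiniteMeasure μb := by
    constructor
    rw [hμb, Measure.restrict_apply_univ]
    exact measure_Ioc_lt_top
  have hQm : AEStronglyMeasurable Q μb := by
    have := hQc.aestronglyMeasurable measurableSet_Icc (μ := volume)
    exact this.mono_measure (Measure.restrict_mono Ioc_subset_Icc_self le_rfl)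
  have hgm : AEStronglyMeasurable g μb := hg.aestronglyMeasurable
  have hQpm : ∀ k : ℕ, AEStronglyMeasurable (fun x => Q x ^ k) μb := fun k =>
    (hQm.aemeasurable.pow_const k).aestronglyMeasurable
  have hpow : ∀ k : ℕ, Integrable (fun w => g w * Q w ^ k) μb := by
    intro k
    refine Integrable.mono' (hg.norm.mul_const (C ^ k)) (hgm.mul (hQpm k)) ?_
    filter_upwards [ae_restrict_mem measurableSet_Ioc] with w hw
    simp only [Real.norm_eq_abs, abs_mul, abs_pow]
    exact mul_le_mul_of_nonneg_left (pow_le_pow_left₀ (abs_nonneg _) (hC' w hw) k)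
      (abs_nonneg _)
  set Fn : ℕ → ℝ → ℝ := fun n z => (g z * Q z ^ n) / n ! with hFndef
  have hFint : ∀ n : ℕ, Integrable (Fn n) μb := fun n => (hpow n).div_const _
  have hexp : ∀ x : ℝ, HasSum (fun n => x ^ n / n !) (Real.exp x) := fun x => by
    rw [Real.exp_eq_exp_ℝ]
    exact NormedSpace.expSeries_div_hasSum_exp x
  have hFsum : Summable fun n => ∫ a, ‖Fn n a‖ ∂μb := by
    refine Summable.of_nonneg_of_le (fun n => integral_nonneg fun a => norm_nonneg _)
      (fun n => ?_) (((Real.summable_pow_div_factorial C).mul_right (∫ a, ‖g a‖ ∂μb)))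
    have hb1 : ∀ᵐ a ∂μb, ‖Fn n a‖ ≤ ‖g a‖ * (C ^ n / n !) := by
      filter_upwards [ae_restrict_mem measurableSet_Ioc] with a ha
      simp only [hFndef, Real.norm_eq_abs, abs_div, abs_mul, abs_pow, abs_inv, Nat.abs_cast,
        div_eq_mul_inv, mul_assoc]
      exact mul_le_mul_of_nonneg_left (mul_le_mul_of_nonneg_right
        (pow_le_pow_left₀ (abs_nonneg _) (hC' a ha) n) (by positivity)) (abs_nonneg _)
    calc ∫ a, ‖Fn n a‖ ∂μb ≤ ∫ a, ‖g a‖ * (C ^ n / n !) ∂μb :=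
          integral_mono_ae (hFint n).norm ((hg.norm).mul_const _) hb1
      _ = C ^ n / ↑n ! * ∫ a, ‖g a‖ ∂μb := by
          rw [MeasureTheory.integral_mul_const]; ring
  have hs := hasSum_integral_of_summable_integral_norm hFint hFsum
  have hptw : ∀ z : ℝ, ∑' n, Fn n z = g z * Real.exp (Q z) := by
    intro z
    have h1 := (hexp (Q z)).mul_left (g z)
    have h2 : (fun n : ℕ => g z * (Q z ^ n / ↑n !)) = fun n => Fn n z := by
      funext n; rw [hFndef]; ring
    rw [h2] at h1
    exact h1.tsum_eq
  have hL : ∫ z, (∑' n, Fn n z) ∂μb = ∫ z, g z * Real.exp (Q z) ∂μb :=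
    integral_congr_ae (Eventually.of_forall fun z => hptw z)
  have hterm : ∀ n : ℕ, ∫ z, Fn n z ∂μb = Q b ^ (n + 1) / ↑(n + 1)! := by
    intro n
    have e1 : ∫ z, Fn n z ∂μb = (∫ z, g z * Q z ^ n ∂μb) / ↑n ! := by
      simp only [hFndef]
      exact integral_div _ _
    have e2 : ∫ z, g z * Q z ^ n ∂μb = Q b ^ (n + 1) / (↑n + 1) := by
      rw [hμb, hQdef]
      exact myaux_pow g b hg n b le_rfl
    rw [e1, e2, Nat.factorial_succ, div_div]
    push_cast
    ring_nf
  have htarget : HasSum (fun n : ℕ => Q b ^ (n + 1) / ↑(n + 1)!) (Real.exp (Q b) - 1) := by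
    have h1 : HasSum (fun n : ℕ => Q b ^ (n + 1) / ↑(n + 1)!)
        (Real.exp (Q b) - ∑ i ∈ Finset.range 1, Q b ^ i / ↑i !) :=
      (hasSum_nat_add_iff' 1).mpr (hexp (Q b))
    simpa using h1
  rw [hL, funext hterm] at hs
  show ∫ z, g z * Real.exp (Q z) ∂μb = Real.exp (Q b) - 1
  exact hs.unique htarget

/-- Fubini identity for the convex function `F`, its right derivative `F'`
(a Stieltjes function whose associated measure is `F''`), and an absolutely
continuous nondecreasing `γ` on `(0,∞)` with `γ(0+)=0`. -/
theorem stmt0 (F : ℝ → ℝ) (F' : StieltjesFunction ℝ)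
    (K : NNReal) (hLip : LipschitzWith K F)
    (hconv : ConvexOn ℝ (Set.Ici 0) F)
    (hF' : ∀ x : ℝ, 0 ≤ x → HasDerivWithinAt F (F' x) (Set.Ioi x) x)
    (γ γ' : ℝ → ℝ)
    (hγmono : MonotoneOn γ (Set.Ioi 0))
    (hγ'int : IntegrableOn γ' (Set.Ioi 0))
    (hγ : ∀ l : ℝ, 0 < l → γ l = ∫ z in (0:ℝ)..l, γ' z)
    (hγ0 : Tendsto γ (nhdsWithin 0 (Set.Ioi 0)) (nhds 0))
    (l : ℝ) (hl : 0 < l) :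
    ∫ z in (0:ℝ)..l,
        γ' z * Real.exp (γ z) * (∫ m in Set.Ioc z l, Real.exp (-γ m) ∂F'.measure)
      = F' l - F' 0 - ∫ m in Set.Ioc 0 l, Real.exp (-γ m) ∂F'.measure := by
  set μ := F'.measure with hμdef
  have hγP : ∀ x : ℝ, 0 < x → γ x = ∫ t in Ioc 0 x, γ' t := fun x hx => by
    rw [hγ x hx, intervalIntegral.integral_of_le hx.le]
  set P : ℝ → ℝ := fun x => ∫ t in Ioc 0 x, γ' t with hPdef
  have hγ'l : IntegrableOn γ' (Ioc 0 l) := hγ'int.mono_set Ioc_subset_Ioi_self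
  have hPc : ContinuousOn P (Icc 0 l) :=
    intervalIntegral.continuousOn_primitive ((integrableOn_Icc_iff_integrableOn_Ioc).2 hγ'l)
  have hγnn : ∀ m : ℝ, 0 < m → 0 ≤ γ m := by
    intro m hm
    refine le_of_tendsto hγ0 ?_
    filter_upwards [Ioo_mem_nhdsGT_of_mem (left_mem_Ico.2 hm)] with z hz
    exact hγmono hz.1 hm hz.2.le
  have hPmono : ∀ z m : ℝ, 0 < z → z ≤ m → P z ≤ P m := by
    intro z m hz hzm
    simp only [hPdef]
    rw [← hγP z hz, ← hγP m (hz.trans_le hzm)]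
    exact hγmono hz (hz.trans_le hzm) hzm
  have hPnn : ∀ m : ℝ, 0 < m → 0 ≤ P m := fun m hm => by
    have := (hγnn m hm).trans_eq (hγP m hm); simpa [hPdef] using this
  -- rewrite everything in terms of P
  rw [intervalIntegral.integral_of_le hl.le]
  have hR : ∫ m in Ioc 0 l, Real.exp (-γ m) ∂μ = ∫ m in Ioc 0 l, Real.exp (-P m) ∂μ :=
    setIntegral_congr_fun measurableSet_Ioc fun m hm => by rw [hγP m hm.1]
  rw [hR]
  have hLcong : ∀ z ∈ Ioc (0:ℝ) l,
      γ' z * Real.exp (γ z) * (∫ m in Ioc z l, Real.exp (-γ m) ∂μ)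
        = γ' z * Real.exp (P z) * (∫ m in Ioc z l, Real.exp (-P m) ∂μ) := by
    intro z hz
    rw [hγP z hz.1]
    congr 1
    exact setIntegral_congr_fun measurableSet_Ioc fun m hm => by rw [hγP m (hz.1.trans hm.1)]
  rw [setIntegral_congr_fun measurableSet_Ioc hLcong]
  -- set up Fubini
  set ν := μ.restrict (Ioc (0:ℝ) l) with hνdef
  set ρ := volume.restrict (Ioc (0:ℝ) l) with hρdef
  haveI hνfin : IsFiniteMeasure ν := by
    constructor
    rw [hνdef, Measure.restrict_apply_univ, hμdef, F'.measure_Ioc]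
    exact ENNReal.ofReal_lt_top
  haveI hρfin : IsFiniteMeasure ρ := by
    constructor
    rw [hρdef, Measure.restrict_apply_univ]
    exact measure_Ioc_lt_top
  have hPmν : AEStronglyMeasurable P ν :=
    (hPc.aestronglyMeasurable measurableSet_Icc (μ := μ)).mono_measure
      (Measure.restrict_mono Ioc_subset_Icc_self le_rfl)
  have hPmρ : AEStronglyMeasurable P ρ :=
    (hPc.aestronglyMeasurable measurableSet_Icc (μ := volume)).mono_measure
      (Measure.restrict_mono Ioc_subset_Icc_self le_rfl)
  have hγ'm : AEStronglyMeasurable γ' ρ := hγ'l.aestronglyMeasurable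
  set H : ℝ × ℝ → ℝ := fun p =>
    if p.1 < p.2 then γ' p.1 * Real.exp (P p.1) * Real.exp (-P p.2) else 0 with hHdef
  have hHm : AEStronglyMeasurable H (ρ.prod ν) := by
    have hinner : AEStronglyMeasurable
        (fun p : ℝ × ℝ => γ' p.1 * Real.exp (P p.1) * Real.exp (-P p.2)) (ρ.prod ν) :=
      ((hγ'm.mul (Real.continuous_exp.comp_aestronglyMeasurable hPmρ)).comp_fst).mul
        ((Real.continuous_exp.comp_aestronglyMeasurable hPmν.neg).comp_snd)
    have : H = {p : ℝ × ℝ | p.1 < p.2}.indicator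
        (fun p => γ' p.1 * Real.exp (P p.1) * Real.exp (-P p.2)) := by
      ext p
      by_cases h : p.1 < p.2 <;> simp [hHdef, Set.indicator_apply, h]
    rw [this]
    exact hinner.indicator (measurableSet_lt measurable_fst measurable_snd)
  have hHint : Integrable H (ρ.prod ν) := by
    refine Integrable.mono' ((hγ'l.norm).mul_prod (integrable_const 1)) hHm ?_
    rw [hρdef, hνdef, Measure.prod_restrict]
    filter_upwards [ae_restrict_mem (measurableSet_Ioc.prod measurableSet_Ioc)] with p hp
    rcases lt_or_ge p.1 p.2 with h | h
    · simp only [hHdef, if_pos h, Real.norm_eq_abs]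
      calc |γ' p.1 * Real.exp (P p.1) * Real.exp (-P p.2)|
          = |γ' p.1| * Real.exp (P p.1 + -P p.2) := by
            rw [abs_mul, abs_mul, abs_of_nonneg (Real.exp_nonneg _),
              abs_of_nonneg (Real.exp_nonneg _), mul_assoc, ← Real.exp_add]
        _ ≤ |γ' p.1| * 1 := by
            refine mul_le_mul_of_nonneg_left (Real.exp_le_one_iff.mpr ?_) (abs_nonneg _)
            have := hPmono p.1 p.2 hp.1.1 h.le
            linarith
    · simp only [hHdef, if_neg (not_lt.2 h), norm_zero, Real.norm_eq_abs]
      exact mul_nonneg (abs_nonneg _) zero_le_one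
  have key1 : ∀ z ∈ Ioc (0:ℝ) l, (∫ m, H (z, m) ∂ν)
      = γ' z * Real.exp (P z) * ∫ m in Ioc z l, Real.exp (-P m) ∂μ := by
    intro z hz
    have h1 : (fun m => H (z, m))
        = (Ioi z).indicator (fun m => γ' z * Real.exp (P z) * Real.exp (-P m)) := by
      ext m
      by_cases h : z < m <;> simp [hHdef, Set.indicator_apply, h]
    rw [h1, integral_indicator measurableSet_Ioi, hνdef,
      Measure.restrict_restrict measurableSet_Ioi]
    have h2 : Ioi z ∩ Ioc 0 l = Ioc z l := by
      rw [Set.inter_comm, Ioc_inter_Ioi, sup_eq_right.2 hz.1.le]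
    rw [h2, MeasureTheory.integral_const_mul]
  have key2 : ∀ m ∈ Ioc (0:ℝ) l, (∫ z, H (z, m) ∂ρ) = 1 - Real.exp (-P m) := by
    intro m hm
    have h1 : (fun z => H (z, m))
        = (Iio m).indicator (fun z => γ' z * Real.exp (P z) * Real.exp (-P m)) := by
      ext z
      by_cases h : z < m <;> simp [hHdef, Set.indicator_apply, h]
    rw [h1, integral_indicator measurableSet_Iio, hρdef,
      Measure.restrict_restrict measurableSet_Iio]
    have h2 : Iio m ∩ Ioc 0 l = Ioo 0 m := by
      ext z
      simp only [mem_inter_iff, mem_Iio, mem_Ioc, mem_Ioo]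
      exact ⟨fun h => ⟨h.2.1, h.1⟩, fun h => ⟨h.2, h.1, h.2.le.trans hm.2⟩⟩
    rw [h2, MeasureTheory.integral_mul_const, ← integral_Ioc_eq_integral_Ioo]
    have h3 : ∫ z in Ioc 0 m, γ' z * Real.exp (P z) = Real.exp (P m) - 1 := by
      simp only [hPdef]
      exact myaux_exp γ' m (hγ'l.mono_set (Ioc_subset_Ioc_right hm.2))
    rw [h3, sub_mul, ← Real.exp_add, add_neg_cancel, Real.exp_zero, one_mul]
  have hexpint : Integrable (fun m => Real.exp (-P m)) ν := by
    refine Integrable.mono' (integrable_const 1)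
      (Real.continuous_exp.comp_aestronglyMeasurable hPmν.neg) ?_
    rw [hνdef]
    filter_upwards [ae_restrict_mem measurableSet_Ioc] with m hm
    rw [Real.norm_eq_abs, abs_of_nonneg (Real.exp_nonneg _)]
    exact Real.exp_le_one_iff.mpr (neg_nonpos.2 (hPnn m hm.1))
  calc ∫ z in Ioc (0:ℝ) l, γ' z * Real.exp (P z) * ∫ m in Ioc z l, Real.exp (-P m) ∂μ
      = ∫ z, (∫ m, H (z, m) ∂ν) ∂ρ := by
        refine (setIntegral_congr_fun measurableSet_Ioc fun z hz => ?_).symm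
        exact key1 z hz
    _ = ∫ m, (∫ z, H (z, m) ∂ρ) ∂ν := integral_integral_swap hHint
    _ = ∫ m in Ioc (0:ℝ) l, (1 - Real.exp (-P m)) ∂μ := by
        refine setIntegral_congr_fun measurableSet_Ioc fun m hm => ?_
        exact key2 m hm
    _ = F' l - F' 0 - ∫ m in Ioc 0 l, Real.exp (-P m) ∂μ := by
        rw [integral_sub (integrable_const 1) hexpint, integral_const]
        have : ν univ = ENNReal.ofReal (F' l - F' 0) := by
          rw [hνdef, Measure.restrict_apply_univ, hμdef, F'.measure_Ioc]
        rw [measureReal_def, this, smul_eq_mul, mul_one,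
          ENNReal.toReal_ofReal (sub_nonneg.2 (F'.mono hl.le))]
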